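/- If P₁ and P₂ are convex polytopes in ℝ^n with the same set of facet normal vectors, u is a facet normal of both with F(P₂,u) a translate of F(P₁,u), and F(P₁,v) is a facet of P₁ adjacent to F(P₁,u) (meeting it in an (n−2)-face), then F(P₂,v) is a facet of P₂ adjacent to F(P₂,u). -/

import Mathlib

open scoped RealInnerProductSpace Pointwise

variable {n : ℕ}

/-- The support set (face) `F_P(u) = {x ∈ P : ⟪x,u⟫ = h_P(u)}`. -/
def supportSet (K : Set (EuclideanSpace ℝ (Fin n))) (u : EuclideanSpace ℝ (Fin n)) :
    Set (EuclideanSpace ℝ (Fin n)) :=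
  {x ∈ K | ⟪x, u⟫ = sSup ((fun y => ⟪y, u⟫) '' K)}

lemma supportSet_subset (K : Set (EuclideanSpace ℝ (Fin n))) (u : EuclideanSpace ℝ (Fin n)) :
    supportSet K u ⊆ K := fun _ h => h.1

lemma inner_le_sup' (S : Finset (EuclideanSpace ℝ (Fin n))) (hS : S.Nonempty)
    (e x : EuclideanSpace ℝ (Fin n)) (hx : x ∈ convexHull ℝ (S : Set _)) :
    ⟪x, e⟫ ≤ S.sup' hS (fun y => ⟪y, e⟫) := by
  have hconv : Convex ℝ {z : EuclideanSpace ℝ (Fin n) | ⟪z, e⟫ ≤ S.sup' hS (fun y => ⟪y, e⟫)} :=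
    convex_halfSpace_le ⟨fun a b => inner_add_left a b e, fun c a => real_inner_smul_left a e c⟩ _
  have hsub : (S : Set (EuclideanSpace ℝ (Fin n))) ⊆
      {z : EuclideanSpace ℝ (Fin n) | ⟪z, e⟫ ≤ S.sup' hS (fun y => ⟪y, e⟫)} :=
    fun z hz => Finset.le_sup' (fun y => (⟪y, e⟫ : ℝ)) hz
  exact convexHull_min hsub hconv hx

lemma isGreatest_polytope (S : Finset (EuclideanSpace ℝ (Fin n))) (hS : S.Nonempty)
    (e : EuclideanSpace ℝ (Fin n)) :
    IsGreatest ((fun x => ⟪x, e⟫) '' convexHull ℝ (S : Set _)) (S.sup' hS fun y => ⟪y, e⟫) := by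
  constructor
  · obtain ⟨y, hy, hye⟩ := Finset.exists_mem_eq_sup' hS fun y => ⟪y, e⟫
    exact ⟨y, subset_convexHull ℝ _ hy, hye.symm⟩
  · rintro r ⟨x, hx, rfl⟩
    exact inner_le_sup' S hS e x hx

lemma mem_supportSet_polytope {S : Finset (EuclideanSpace ℝ (Fin n))} (hS : S.Nonempty)
    {e x : EuclideanSpace ℝ (Fin n)} :
    x ∈ supportSet (convexHull ℝ (S : Set _)) e ↔
      x ∈ convexHull ℝ (S : Set _) ∧ ⟪x, e⟫ = S.sup' hS (fun y => ⟪y, e⟫) := by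
  unfold supportSet
  rw [Set.mem_sep_iff, (isGreatest_polytope S hS e).csSup_eq]

lemma supportSet_polytope_smul (S : Finset (EuclideanSpace ℝ (Fin n))) (hS : S.Nonempty)
    {c : ℝ} (hc : 0 < c) (e : EuclideanSpace ℝ (Fin n)) :
    supportSet (convexHull ℝ (S : Set _)) (c • e) = supportSet (convexHull ℝ (S : Set _)) e := by
  have hsup : S.sup' hS (fun y => ⟪y, c • e⟫) = c * S.sup' hS (fun y => ⟪y, e⟫) := by
    have h0 : (fun y : EuclideanSpace ℝ (Fin n) => (⟪y, c • e⟫ : ℝ))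
        = (fun r => c * r) ∘ (fun y => (⟪y, e⟫ : ℝ)) := by
      funext z; exact real_inner_smul_right z e c
    rw [h0, ← Finset.comp_sup'_eq_sup'_comp hS (fun r => c * r)
      (fun a b => ((monotone_mul_left_of_nonneg hc.le).map_sup a b))]
  ext x
  rw [mem_supportSet_polytope hS, mem_supportSet_polytope hS, hsup, real_inner_smul_right]
  constructor
  · rintro ⟨h1, h2⟩; exact ⟨h1, mul_left_cancel₀ hc.ne' h2⟩
  · rintro ⟨h1, h2⟩; exact ⟨h1, by rw [h2]⟩

lemma supportSet_translate (K : Set (EuclideanSpace ℝ (Fin n))) (y e : EuclideanSpace ℝ (Fin n))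
    (a : ℝ) (h : IsGreatest ((fun x => ⟪x, e⟫) '' K) a) :
    supportSet ((fun x => y + x) '' K) e = (fun x => y + x) '' supportSet K e := by
  have h2 : IsGreatest ((fun x => ⟪x, e⟫) '' ((fun x => y + x) '' K)) (⟪y, e⟫ + a) := by
    constructor
    · obtain ⟨x, hx, rfl⟩ := h.1
      exact ⟨y + x, ⟨x, hx, rfl⟩, by simp only [inner_add_left]⟩
    · rintro r ⟨_, ⟨k, hk, rfl⟩, rfl⟩
      have := h.2 ⟨k, hk, rfl⟩
      simp only at this ⊢
      rw [inner_add_left]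
      linarith
  unfold supportSet
  rw [h2.csSup_eq, h.csSup_eq]
  ext x
  constructor
  · rintro ⟨⟨k, hk, rfl⟩, h3⟩
    refine ⟨k, ⟨hk, ?_⟩, rfl⟩
    simp only at h3
    rw [inner_add_left] at h3; linarith
  · rintro ⟨k, ⟨hk, hk2⟩, rfl⟩
    exact ⟨⟨k, hk, rfl⟩, by simp only; rw [inner_add_left, hk2]⟩

lemma vectorSpan_translate (K : Set (EuclideanSpace ℝ (Fin n))) (y : EuclideanSpace ℝ (Fin n)) :
    vectorSpan ℝ ((fun x => y + x) '' K) = vectorSpan ℝ K := by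
  rw [vectorSpan_def, vectorSpan_def]
  congr 1
  ext z
  simp only [Set.mem_vsub, Set.mem_image]
  constructor
  · rintro ⟨_, ⟨a, ha, rfl⟩, _, ⟨b, hb, rfl⟩, rfl⟩
    exact ⟨a, ha, b, hb, by simp [vsub_eq_sub]⟩
  · rintro ⟨a, ha, b, hb, rfl⟩
    exact ⟨y + a, ⟨a, ha, rfl⟩, y + b, ⟨b, hb, rfl⟩, by simp [vsub_eq_sub]⟩

lemma vectorSpan_le_orthogonal (K : Set (EuclideanSpace ℝ (Fin n)))
    (w : EuclideanSpace ℝ (Fin n)) (c : ℝ) (h : ∀ x ∈ K, ⟪x, w⟫ = c) :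
    vectorSpan ℝ K ≤ (Submodule.span ℝ {w})ᗮ := by
  rw [vectorSpan_def]
  rw [Submodule.span_le]
  rintro z ⟨a, ha, b, hb, rfl⟩
  rw [SetLike.mem_coe, Submodule.mem_orthogonal_singleton_iff_inner_right]
  have : ⟪a -ᵥ b, w⟫ = 0 := by
    rw [vsub_eq_sub, inner_sub_left, h a ha, h b hb, sub_self]
  rw [real_inner_comm] at this
  exact this

lemma finrank_orth_singleton {w : EuclideanSpace ℝ (Fin n)} (hw : w ≠ 0) :
    Module.finrank ℝ ((Submodule.span ℝ {w})ᗮ : Submodule ℝ (EuclideanSpace ℝ (Fin n))) = n - 1 := by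
  have h1 := Submodule.finrank_add_finrank_orthogonal (Submodule.span ℝ ({w} : Set _))
  rw [finrank_span_singleton hw, finrank_euclideanSpace_fin] at h1
  omega

lemma supportSet_neg_disjoint (S : Finset (EuclideanSpace ℝ (Fin n))) (hS : S.Nonempty)
    (hint : (interior (convexHull ℝ (S : Set (EuclideanSpace ℝ (Fin n))))).Nonempty)
    (w : EuclideanSpace ℝ (Fin n)) (hw : ‖w‖ = 1) :
    supportSet (convexHull ℝ (S : Set _)) w ∩ supportSet (convexHull ℝ (S : Set _)) (-w) = ∅ := by
  obtain ⟨c, hc⟩ := hint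
  rw [mem_interior_iff_mem_nhds] at hc
  rw [Metric.mem_nhds_iff] at hc
  obtain ⟨ε, hε, hball⟩ := hc
  rw [Set.eq_empty_iff_forall_notMem]
  rintro x ⟨hx1, hx2⟩
  rw [mem_supportSet_polytope hS] at hx1 hx2
  have hww : (⟪w, w⟫ : ℝ) = 1 := by
    rw [real_inner_self_eq_norm_mul_norm, hw]; norm_num
  have hm1 : c + (ε/2) • w ∈ convexHull ℝ (S : Set _) := by
    apply hball
    rw [Metric.mem_ball, dist_eq_norm]
    have : c + (ε/2) • w - c = (ε/2) • w := by abel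
    rw [this, norm_smul, hw]
    rw [Real.norm_eq_abs, abs_of_pos (half_pos hε)]
    linarith
  have hm2 : c + (ε/2) • (-w) ∈ convexHull ℝ (S : Set _) := by
    apply hball
    rw [Metric.mem_ball, dist_eq_norm]
    have : c + (ε/2) • (-w) - c = (ε/2) • (-w) := by abel
    rw [this, norm_smul, norm_neg, hw]
    rw [Real.norm_eq_abs, abs_of_pos (half_pos hε)]
    linarith
  have h1 := inner_le_sup' S hS w _ hm1
  have h2 := inner_le_sup' S hS (-w) _ hm2
  rw [inner_add_left, real_inner_smul_left, hww] at h1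
  rw [inner_add_left, real_inner_smul_left, inner_neg_neg, hww] at h2
  rw [← hx1.2] at h1
  rw [← hx2.2] at h2
  have hxw : (⟪x, -w⟫ : ℝ) = -⟪x, w⟫ := inner_neg_right x w
  have hcw : (⟪c, -w⟫ : ℝ) = -⟪c, w⟫ := inner_neg_right c w
  rw [hxw, hcw] at h2
  linarith

lemma mem_supportSet_iff {K : Set (EuclideanSpace ℝ (Fin n))} {u x : EuclideanSpace ℝ (Fin n)} :
    x ∈ supportSet K u ↔ x ∈ K ∧ ⟪x, u⟫ = sSup ((fun y => ⟪y, u⟫) '' K) := Iff.rfl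

set_option maxHeartbeats 2000000 in
lemma main_aux (hn : 3 ≤ n) (S₁ S₂ : Finset (EuclideanSpace ℝ (Fin n)))
    (hS₁ : S₁.Nonempty) (hS₂ : S₂.Nonempty)
    (hdim₁ : (interior (convexHull ℝ (S₁ : Set (EuclideanSpace ℝ (Fin n))))).Nonempty)
    (hsame : ∀ w : EuclideanSpace ℝ (Fin n), ‖w‖ = 1 →
      (Module.finrank ℝ (vectorSpan ℝ (supportSet (convexHull ℝ ↑S₁) w)) = n - 1 ↔
       Module.finrank ℝ (vectorSpan ℝ (supportSet (convexHull ℝ ↑S₂) w)) = n - 1))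
    (u : EuclideanSpace ℝ (Fin n)) (hu : ‖u‖ = 1)
    (y : EuclideanSpace ℝ (Fin n))
    (hy : supportSet (convexHull ℝ ↑S₂) u = (fun x => y + x) '' supportSet (convexHull ℝ ↑S₁) u)
    (v : EuclideanSpace ℝ (Fin n)) (hv : ‖v‖ = 1)
    (hadj : Module.finrank ℝ (vectorSpan ℝ
      (supportSet (convexHull ℝ ↑S₁) u ∩ supportSet (convexHull ℝ ↑S₁) v)) = n - 2) :
    Module.finrank ℝ (vectorSpan ℝ
      (supportSet (convexHull ℝ ↑S₂) u ∩ supportSet (convexHull ℝ ↑S₂) v)) = n - 2 := by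
  -- the intersection on the P₁ side is nonempty
  have hne₁ : (supportSet (convexHull ℝ ↑S₁) u ∩ supportSet (convexHull ℝ ↑S₁) v).Nonempty := by
    by_contra h
    rw [Set.not_nonempty_iff_eq_empty] at h
    rw [h, vectorSpan_empty, finrank_bot] at hadj
    omega
  obtain ⟨x₀, hx₀u, hx₀v⟩ := hne₁
  have hx₀u' := (mem_supportSet_polytope hS₁).mp hx₀u
  have hx₀v' := (mem_supportSet_polytope hS₁).mp hx₀v
  have hvnegu : v ≠ -u := by
    intro h
    have hdisj := supportSet_neg_disjoint S₁ hS₁ hdim₁ u hu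
    rw [h] at hx₀v
    exact Set.eq_empty_iff_forall_notMem.mp hdisj x₀ ⟨hx₀u, hx₀v⟩
  -- IsGreatest for v over F(P₁,u)
  have hgrF : IsGreatest ((fun z => ⟪z, v⟫) '' supportSet (convexHull ℝ ↑S₁) u)
      (S₁.sup' hS₁ fun z => ⟪z, v⟫) := by
    constructor
    · exact ⟨x₀, hx₀u, hx₀v'.2⟩
    · rintro r ⟨z, hz, rfl⟩
      exact inner_le_sup' S₁ hS₁ v z (supportSet_subset _ _ hz)
  -- F(F(P₁,u),v) = F(P₁,u) ∩ F(P₁,v)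
  have hG₁ : supportSet (supportSet (convexHull ℝ ↑S₁) u) v
      = supportSet (convexHull ℝ ↑S₁) u ∩ supportSet (convexHull ℝ ↑S₁) v := by
    ext z
    rw [mem_supportSet_iff, hgrF.csSup_eq]
    constructor
    · rintro ⟨hz1, hz2⟩
      exact ⟨hz1, (mem_supportSet_polytope hS₁).mpr ⟨supportSet_subset _ _ hz1, hz2⟩⟩
    · rintro ⟨hz1, hz2⟩
      exact ⟨hz1, ((mem_supportSet_polytope hS₁).mp hz2).2⟩
  -- F(F(P₂,u),v) is a translate of the (n-2)-face
  have hG₂ : supportSet (supportSet (convexHull ℝ ↑S₂) u) v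
      = (fun x => y + x) '' (supportSet (convexHull ℝ ↑S₁) u ∩ supportSet (convexHull ℝ ↑S₁) v) := by
    rw [hy, supportSet_translate _ y v _ hgrF, hG₁]
  -- the distinguished point g
  have hgG₂ : y + x₀ ∈ supportSet (supportSet (convexHull ℝ ↑S₂) u) v := by
    rw [hG₂]; exact ⟨x₀, ⟨hx₀u, hx₀v⟩, rfl⟩
  set g : EuclideanSpace ℝ (Fin n) := y + x₀ with hgdef
  have hgF₂ : g ∈ supportSet (convexHull ℝ ↑S₂) u := supportSet_subset _ _ hgG₂
  have hgP₂ : g ∈ convexHull ℝ (S₂ : Set (EuclideanSpace ℝ (Fin n))) := supportSet_subset _ _ hgF₂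
  have hgu : ⟪g, u⟫ = S₂.sup' hS₂ (fun z => ⟪z, u⟫) := ((mem_supportSet_polytope hS₂).mp hgF₂).2
  have hgv_sSup : ⟪g, v⟫ = sSup ((fun z => ⟪z, v⟫) '' supportSet (convexHull ℝ ↑S₂) u) :=
    (mem_supportSet_iff.mp hgG₂).2
  have hbddF₂ : BddAbove ((fun z => ⟪z, v⟫) '' supportSet (convexHull ℝ ↑S₂) u) := by
    refine ⟨S₂.sup' hS₂ (fun z => ⟪z, v⟫), ?_⟩
    rintro r ⟨z, hz, rfl⟩
    exact inner_le_sup' S₂ hS₂ v z (supportSet_subset _ _ hz)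
  -- the two linear gap functions
  set Af : EuclideanSpace ℝ (Fin n) → ℝ := fun x => ⟪x, u⟫ - ⟪g, u⟫ with hAfdef
  set Bf : EuclideanSpace ℝ (Fin n) → ℝ := fun x => ⟪x, v⟫ - ⟪g, v⟫ with hBfdef
  have hA : ∀ x ∈ S₂, Af x ≤ 0 := by
    intro x hx
    have h1 := Finset.le_sup' (fun z => (⟪z, u⟫ : ℝ)) hx
    simp only [hAfdef]
    rw [hgu]
    linarith
  have hB0 : ∀ x ∈ S₂, Af x = 0 → Bf x ≤ 0 := by
    intro x hx h0
    have hxval : ⟪x, u⟫ = S₂.sup' hS₂ (fun z => ⟪z, u⟫) := by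
      simp only [hAfdef] at h0
      rw [← hgu]; linarith
    have hxF : x ∈ supportSet (convexHull ℝ ↑S₂) u :=
      (mem_supportSet_polytope hS₂).mpr ⟨subset_convexHull ℝ _ hx, hxval⟩
    have hle : ⟪x, v⟫ ≤ sSup ((fun z => ⟪z, v⟫) '' supportSet (convexHull ℝ ↑S₂) u) :=
      le_csSup hbddF₂ ⟨x, hxF, rfl⟩
    simp only [hBfdef]
    rw [hgv_sSup]
    linarith
  -- the set of admissible parameters
  set Z : Set ℝ := Set.Icc (0:ℝ) 1 ∩
    ⋂ x ∈ (S₂ : Set (EuclideanSpace ℝ (Fin n))), {s : ℝ | (1-s) * Af x + s * Bf x ≤ 0} with hZdef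
  have hZmem : ∀ s : ℝ, s ∈ Z ↔ (0 ≤ s ∧ s ≤ 1) ∧ ∀ x ∈ S₂, (1-s) * Af x + s * Bf x ≤ 0 := by
    intro s
    simp [hZdef, Set.mem_Icc]
  have hZclosed : IsClosed Z := by
    apply IsClosed.inter isClosed_Icc
    apply isClosed_biInter
    intro x hx
    exact isClosed_le (by fun_prop) continuous_const
  have hZ0 : (0:ℝ) ∈ Z := by
    rw [hZmem]
    refine ⟨⟨le_refl 0, by norm_num⟩, fun x hx => ?_⟩
    have := hA x hx
    nlinarith
  have hZcomp : IsCompact Z :=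
    IsCompact.of_isClosed_subset isCompact_Icc hZclosed Set.inter_subset_left
  have hZne : Z.Nonempty := ⟨0, hZ0⟩
  have hZbdd : BddAbove Z := hZcomp.bddAbove
  obtain ⟨s', hs'def⟩ : ∃ t : ℝ, t = sSup Z := ⟨_, rfl⟩
  have hsZ : s' ∈ Z := by rw [hs'def]; exact hZcomp.sSup_mem hZne
  -- membership in Z puts g on the corresponding face
  have hface : ∀ s ∈ Z, g ∈ supportSet (convexHull ℝ ↑S₂) ((1-s) • u + s • v) ∧
      (S₂.sup' hS₂ fun z => ⟪z, (1-s) • u + s • v⟫) = ⟪g, (1-s) • u + s • v⟫ := by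
    intro s hs
    obtain ⟨_, hs2⟩ := (hZmem s).mp hs
    have hub : ∀ x ∈ S₂, ⟪x, (1-s) • u + s • v⟫ ≤ (⟪g, (1-s) • u + s • v⟫ : ℝ) := by
      intro x hx
      have h1 := hs2 x hx
      simp only [hAfdef, hBfdef] at h1
      rw [inner_add_right, real_inner_smul_right, real_inner_smul_right,
        inner_add_right, real_inner_smul_right, real_inner_smul_right]
      nlinarith
    have heq : (S₂.sup' hS₂ fun z => ⟪z, (1-s) • u + s • v⟫) = ⟪g, (1-s) • u + s • v⟫ :=
      le_antisymm (Finset.sup'_le _ _ hub) (inner_le_sup' S₂ hS₂ _ g hgP₂)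
    exact ⟨(mem_supportSet_polytope hS₂).mpr ⟨hgP₂, heq.symm⟩, heq⟩
  -- Step 1 : Z contains a positive element
  have hstep1 : ∃ ε : ℝ, 0 < ε ∧ ε ∈ Z := by
    set F : EuclideanSpace ℝ (Fin n) → ℝ :=
      fun x => if Af x < 0 then (-Af x)/(|Bf x - Af x| + 1) else 1 with hFdef
    have hFpos : ∀ x ∈ S₂, 0 < F x := by
      intro x hx
      simp only [hFdef]
      split
      · rename_i hlt
        exact div_pos (by linarith) (by positivity)
      · norm_num
    set ε : ℝ := min 1 (S₂.inf' hS₂ F) with hεdef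
    have hεpos : 0 < ε := lt_min one_pos ((Finset.lt_inf'_iff hS₂).mpr hFpos)
    refine ⟨ε, hεpos, ?_⟩
    rw [hZmem]
    refine ⟨⟨hεpos.le, min_le_left _ _⟩, fun x hx => ?_⟩
    have hεle : ε ≤ F x := le_trans (min_le_right _ _) (Finset.inf'_le F hx)
    rcases lt_or_eq_of_le (hA x hx) with hlt | heq0
    · have hFx : F x = (-Af x)/(|Bf x - Af x| + 1) := if_pos hlt
      rw [hFx] at hεle
      have h2 : ε * (|Bf x - Af x| + 1) ≤ -Af x :=
        (le_div_iff₀ (by positivity)).mp hεle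
      have h3 : ε * (Bf x - Af x) ≤ ε * |Bf x - Af x| :=
        mul_le_mul_of_nonneg_left (le_abs_self _) hεpos.le
      nlinarith [abs_nonneg (Bf x - Af x)]
    · have hBx := hB0 x hx heq0
      have h4 : ε * Bf x ≤ 0 := mul_nonpos_of_nonneg_of_nonpos hεpos.le hBx
      nlinarith
  obtain ⟨ε, hεpos, hεZ⟩ := hstep1
  have hs'pos : 0 < s' := by
    rw [hs'def]; exact lt_of_lt_of_le hεpos (le_csSup hZbdd hεZ)
  have hs'le1 : s' ≤ 1 := ((hZmem s').mp hsZ).1.2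
  -- the crux : sSup Z = 1
  have hs1 : s' = 1 := by
    by_contra hne
    have hs'lt1 : s' < 1 := lt_of_le_of_ne hs'le1 hne
    obtain ⟨e, hedef⟩ : ∃ e : EuclideanSpace ℝ (Fin n), e = (1-s') • u + s' • v := ⟨_, rfl⟩
    have he0 : e ≠ 0 := by
      intro h0
      have h1 : (1-s') • u = -(s' • v) := by
        rw [eq_neg_iff_add_eq_zero]; rw [← hedef]; exact h0
      have h2 : |1 - s'| = |s'| := by
        have := congrArg norm h1
        rw [norm_smul, norm_neg, norm_smul, hu, hv, Real.norm_eq_abs, Real.norm_eq_abs] at this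
        simpa using this
      rw [abs_of_pos (by linarith : (0:ℝ) < 1 - s'), abs_of_pos hs'pos] at h2
      have hs'half : s' = 1/2 := by linarith
      apply hvnegu
      have h3 : (1/2 : ℝ) • u = -((1/2 : ℝ) • v) := by
        have h15 : 1 - s' = s' := by linarith
        rw [h15] at h1
        rw [hs'half] at h1
        exact h1
      have h4 : (1/2 : ℝ) • u = (1/2 : ℝ) • (-v) := by rw [h3, smul_neg]
      have h5 : u = -v := smul_right_injective _ (by norm_num : (1/2:ℝ) ≠ 0) h4
      rw [h5]; simp
    -- P₁ side : the face of P₁ in direction e is inside the (n-2)-face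
    have hm₁e : S₁.sup' hS₁ (fun z => ⟪z, e⟫)
        = (1-s') * (S₁.sup' hS₁ fun z => ⟪z, u⟫) + s' * (S₁.sup' hS₁ fun z => ⟪z, v⟫) := by
      apply le_antisymm
      · apply Finset.sup'_le
        intro z hz
        have h1 := Finset.le_sup' (fun z => (⟪z, u⟫ : ℝ)) hz
        have h2 := Finset.le_sup' (fun z => (⟪z, v⟫ : ℝ)) hz
        rw [hedef, inner_add_right, real_inner_smul_right, real_inner_smul_right]
        have e1 := mul_le_mul_of_nonneg_left h1 (by linarith : (0:ℝ) ≤ 1 - s')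
        have e2 := mul_le_mul_of_nonneg_left h2 hs'pos.le
        linarith
      · have hx₀e : ⟪x₀, e⟫ = (1-s') * (S₁.sup' hS₁ fun z => ⟪z, u⟫)
            + s' * (S₁.sup' hS₁ fun z => ⟪z, v⟫) := by
          rw [hedef, inner_add_right, real_inner_smul_right, real_inner_smul_right,
            hx₀u'.2, hx₀v'.2]
        rw [← hx₀e]
        exact inner_le_sup' S₁ hS₁ e x₀ hx₀u'.1
    have hP₁e_sub : supportSet (convexHull ℝ ↑S₁) e
        ⊆ supportSet (convexHull ℝ ↑S₁) u ∩ supportSet (convexHull ℝ ↑S₁) v := by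
      intro z hz
      obtain ⟨hz1, hz2⟩ := (mem_supportSet_polytope hS₁).mp hz
      rw [hm₁e] at hz2
      have h1 : ⟪z, u⟫ ≤ S₁.sup' hS₁ (fun z => ⟪z, u⟫) := inner_le_sup' S₁ hS₁ u z hz1
      have h2 : ⟪z, v⟫ ≤ S₁.sup' hS₁ (fun z => ⟪z, v⟫) := inner_le_sup' S₁ hS₁ v z hz1
      rw [hedef, inner_add_right, real_inner_smul_right, real_inner_smul_right] at hz2
      have hc1 : (0:ℝ) < 1 - s' := by linarith
      have e1 := mul_le_mul_of_nonneg_left h1 hc1.le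
      have e2 := mul_le_mul_of_nonneg_left h2 hs'pos.le
      have hzu : ⟪z, u⟫ = S₁.sup' hS₁ (fun z => ⟪z, u⟫) := by
        have h4 : (1 - s') * ⟪z, u⟫ = (1 - s') * S₁.sup' hS₁ (fun z => ⟪z, u⟫) := by linarith
        exact mul_left_cancel₀ hc1.ne' h4
      have hzv : ⟪z, v⟫ = S₁.sup' hS₁ (fun z => ⟪z, v⟫) := by
        have h4 : s' * ⟪z, v⟫ = s' * S₁.sup' hS₁ (fun z => ⟪z, v⟫) := by linarith
        exact mul_left_cancel₀ hs'pos.ne' h4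
      exact ⟨(mem_supportSet_polytope hS₁).mpr ⟨hz1, hzu⟩,
        (mem_supportSet_polytope hS₁).mpr ⟨hz1, hzv⟩⟩
    -- the unit normal w
    have hcpos : 0 < ‖e‖ := norm_pos_iff.mpr he0
    obtain ⟨w, hwdef⟩ : ∃ w : EuclideanSpace ℝ (Fin n), w = ‖e‖⁻¹ • e := ⟨_, rfl⟩
    have hwnorm : ‖w‖ = 1 := by
      rw [hwdef, norm_smul, norm_inv, norm_norm, inv_mul_cancel₀ hcpos.ne']
    have hw0 : w ≠ 0 := by
      intro h0
      rw [h0, norm_zero] at hwnorm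
      norm_num at hwnorm
    have hew : ‖e‖ • w = e := by
      rw [hwdef, smul_smul, mul_inv_cancel₀ hcpos.ne', one_smul]
    have hssP₁ : supportSet (convexHull ℝ ↑S₁) e = supportSet (convexHull ℝ ↑S₁) w := by
      rw [← hew]; exact supportSet_polytope_smul S₁ hS₁ hcpos w
    have hssP₂ : supportSet (convexHull ℝ ↑S₂) e = supportSet (convexHull ℝ ↑S₂) w := by
      rw [← hew]; exact supportSet_polytope_smul S₂ hS₂ hcpos w
    -- P₁ : direction w is not a facet normal
    have hfr₁ : Module.finrank ℝ (vectorSpan ℝ (supportSet (convexHull ℝ ↑S₁) w)) ≤ n - 2 := by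
      rw [← hssP₁]
      have := Submodule.finrank_mono (vectorSpan_mono ℝ hP₁e_sub)
      rw [hadj] at this
      exact this
    have hfr₂ : Module.finrank ℝ (vectorSpan ℝ (supportSet (convexHull ℝ ↑S₂) w)) ≠ n - 1 := by
      intro hcon
      have := (hsame w hwnorm).mpr hcon
      omega
    -- P₂ : the face in direction w contains the translated (n-2)-face
    have hgface := hface s' hsZ
    have hge : g ∈ supportSet (convexHull ℝ ↑S₂) e := by rw [hedef]; exact hgface.1
    have hG₂sub : supportSet (supportSet (convexHull ℝ ↑S₂) u) v
        ⊆ supportSet (convexHull ℝ ↑S₂) e := by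
      intro x hx
      have hx1 : x ∈ supportSet (convexHull ℝ ↑S₂) u := supportSet_subset _ _ hx
      have hxu : ⟪x, u⟫ = ⟪g, u⟫ :=
        (mem_supportSet_iff.mp hx1).2.trans ((mem_supportSet_iff.mp hgF₂).2).symm
      have hxv : ⟪x, v⟫ = ⟪g, v⟫ := (mem_supportSet_iff.mp hx).2.trans hgv_sSup.symm
      refine (mem_supportSet_polytope hS₂).mpr ⟨supportSet_subset _ _ hx1, ?_⟩
      rw [hedef, hgface.2, inner_add_right, real_inner_smul_right, real_inner_smul_right,
        inner_add_right, real_inner_smul_right, real_inner_smul_right, hxu, hxv]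
    -- dimension bookkeeping
    have hVfr : Module.finrank ℝ
        (vectorSpan ℝ (supportSet (supportSet (convexHull ℝ ↑S₂) u) v)) = n - 2 := by
      rw [hG₂, vectorSpan_translate]
      exact hadj
    have hWle : vectorSpan ℝ (supportSet (supportSet (convexHull ℝ ↑S₂) u) v)
        ≤ vectorSpan ℝ (supportSet (convexHull ℝ ↑S₂) w) := by
      rw [← hssP₂]
      exact vectorSpan_mono ℝ hG₂sub
    have hWub : Module.finrank ℝ (vectorSpan ℝ (supportSet (convexHull ℝ ↑S₂) w)) ≤ n - 1 := by
      have hle := vectorSpan_le_orthogonal (supportSet (convexHull ℝ ↑S₂) w) w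
        (sSup ((fun z => ⟪z, w⟫) '' convexHull ℝ ↑S₂)) (fun x hx => (mem_supportSet_iff.mp hx).2)
      have := Submodule.finrank_mono hle
      rw [finrank_orth_singleton hw0] at this
      exact this
    have hWVle : Module.finrank ℝ
        (vectorSpan ℝ (supportSet (supportSet (convexHull ℝ ↑S₂) u) v))
        ≤ Module.finrank ℝ (vectorSpan ℝ (supportSet (convexHull ℝ ↑S₂) w)) :=
      Submodule.finrank_mono hWle
    have hWV : vectorSpan ℝ (supportSet (supportSet (convexHull ℝ ↑S₂) u) v)
        = vectorSpan ℝ (supportSet (convexHull ℝ ↑S₂) w) :=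
      Submodule.eq_of_le_of_finrank_le hWle (by omega)
    -- orthogonality of u and v to the span
    have hVu : vectorSpan ℝ (supportSet (supportSet (convexHull ℝ ↑S₂) u) v)
        ≤ (Submodule.span ℝ {u})ᗮ := by
      apply vectorSpan_le_orthogonal _ u (⟪g, u⟫)
      intro x hx
      exact (mem_supportSet_iff.mp (supportSet_subset _ _ hx)).2.trans
        ((mem_supportSet_iff.mp hgF₂).2).symm
    have hVv : vectorSpan ℝ (supportSet (supportSet (convexHull ℝ ↑S₂) u) v)
        ≤ (Submodule.span ℝ {v})ᗮ := by
      apply vectorSpan_le_orthogonal _ v (⟪g, v⟫)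
      intro x hx
      exact (mem_supportSet_iff.mp hx).2.trans hgv_sSup.symm
    -- points of S₂ on the face in direction e have zero gaps
    have hC0 : ∀ x ∈ S₂, (1-s') * Af x + s' * Bf x = 0 → Af x = 0 ∧ Bf x = 0 := by
      intro x hx h0
      have hxe : x ∈ supportSet (convexHull ℝ ↑S₂) e := by
        refine (mem_supportSet_polytope hS₂).mpr ⟨subset_convexHull ℝ _ hx, ?_⟩
        rw [hedef, hgface.2, inner_add_right, real_inner_smul_right, real_inner_smul_right,
          inner_add_right, real_inner_smul_right, real_inner_smul_right]
        simp only [hAfdef, hBfdef] at h0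
        linear_combination h0
      have hmemV : x -ᵥ g ∈ vectorSpan ℝ (supportSet (supportSet (convexHull ℝ ↑S₂) u) v) := by
        rw [hWV, ← hssP₂]
        exact vsub_mem_vectorSpan ℝ hxe hge
      constructor
      · have h1 := Submodule.mem_orthogonal_singleton_iff_inner_right.mp (hVu hmemV)
        rw [real_inner_comm] at h1
        have h2 : ⟪x - g, u⟫ = (0:ℝ) := h1
        rw [inner_sub_left] at h2
        simp only [hAfdef]
        linarith
      · have h1 := Submodule.mem_orthogonal_singleton_iff_inner_right.mp (hVv hmemV)
        rw [real_inner_comm] at h1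
        have h2 : ⟪x - g, v⟫ = (0:ℝ) := h1
        rw [inner_sub_left] at h2
        simp only [hBfdef]
        linarith
    -- Step 2 : extend beyond s'
    have hCle : ∀ x ∈ S₂, (1-s') * Af x + s' * Bf x ≤ 0 := ((hZmem s').mp hsZ).2
    set F₂ : EuclideanSpace ℝ (Fin n) → ℝ := fun x =>
      if (1-s') * Af x + s' * Bf x < 0
      then (-((1-s') * Af x + s' * Bf x))/(|Bf x - Af x| + 1) else (1 - s') with hF₂def
    have hF₂pos : ∀ x ∈ S₂, 0 < F₂ x := by
      intro x hx
      simp only [hF₂def]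
      split
      · rename_i hlt
        exact div_pos (by linarith) (by positivity)
      · linarith
    set ε₂ : ℝ := min (1 - s') (S₂.inf' hS₂ F₂) with hε₂def
    have hε₂pos : 0 < ε₂ :=
      lt_min (by linarith) ((Finset.lt_inf'_iff hS₂).mpr hF₂pos)
    have hs''Z : s' + ε₂ ∈ Z := by
      rw [hZmem]
      refine ⟨⟨by linarith, ?_⟩, fun x hx => ?_⟩
      · have := min_le_left (1 - s') (S₂.inf' hS₂ F₂)
        rw [← hε₂def] at this
        linarith
      · have hεle : ε₂ ≤ F₂ x := le_trans (min_le_right _ _) (Finset.inf'_le F₂ hx)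
        have hkey : (1-(s'+ε₂)) * Af x + (s'+ε₂) * Bf x
            = ((1-s') * Af x + s' * Bf x) + ε₂ * (Bf x - Af x) := by ring
        rw [hkey]
        rcases lt_or_eq_of_le (hCle x hx) with hlt | heq0
        · have hF₂x : F₂ x = (-((1-s') * Af x + s' * Bf x))/(|Bf x - Af x| + 1) := if_pos hlt
          rw [hF₂x] at hεle
          have h2 : ε₂ * (|Bf x - Af x| + 1) ≤ -((1-s') * Af x + s' * Bf x) :=
            (le_div_iff₀ (by positivity)).mp hεle
          have h3 : ε₂ * (Bf x - Af x) ≤ ε₂ * |Bf x - Af x| :=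
            mul_le_mul_of_nonneg_left (le_abs_self _) hε₂pos.le
          nlinarith [abs_nonneg (Bf x - Af x)]
        · obtain ⟨hA0, hB0'⟩ := hC0 x hx heq0
          rw [hA0, hB0']
          ring_nf
          rfl
    have h9 : s' + ε₂ ≤ sSup Z := le_csSup hZbdd hs''Z
    rw [← hs'def] at h9
    linarith
  -- conclusion : g lies on the face of P₂ in direction v
  have h1Z : (1:ℝ) ∈ Z := hs1 ▸ hsZ
  have hgv_eq : ⟪g, v⟫ = S₂.sup' hS₂ (fun z => ⟪z, v⟫) := by
    have h2 := (hface 1 h1Z).2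
    have h3 : (1-(1:ℝ)) • u + (1:ℝ) • v = v := by
      norm_num
    rw [h3] at h2
    exact h2.symm
  have hfinal : supportSet (convexHull ℝ ↑S₂) u ∩ supportSet (convexHull ℝ ↑S₂) v
      = supportSet (supportSet (convexHull ℝ ↑S₂) u) v := by
    ext x
    constructor
    · rintro ⟨hx1, hx2⟩
      refine ⟨hx1, ?_⟩
      rw [← hgv_sSup]
      rw [((mem_supportSet_polytope hS₂).mp hx2).2, ← hgv_eq]
    · intro hx
      have hx1 : x ∈ supportSet (convexHull ℝ ↑S₂) u := supportSet_subset _ _ hx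
      have hxv : ⟪x, v⟫ = ⟪g, v⟫ := (mem_supportSet_iff.mp hx).2.trans hgv_sSup.symm
      exact ⟨hx1, (mem_supportSet_polytope hS₂).mpr
        ⟨supportSet_subset _ _ hx1, by rw [hxv, hgv_eq]⟩⟩
  rw [hfinal, hG₂, vectorSpan_translate]
  exact hadj

/-- If `P₁`, `P₂` are `n`-dimensional convex polytopes in `ℝⁿ` with the same set of facet
normal vectors, `u` is a facet normal of both with `F(P₂,u)` a translate of `F(P₁,u)`, and
`F(P₁,v)` is a facet of `P₁` adjacent to `F(P₁,u)` (meeting it in an `(n-2)`-face), then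
`F(P₂,v)` is a facet of `P₂` adjacent to `F(P₂,u)`. -/
theorem stmt16 (P₁ P₂ : Set (EuclideanSpace ℝ (Fin n)))
    (hP₁ : ∃ S : Finset (EuclideanSpace ℝ (Fin n)), P₁ = convexHull ℝ (S : Set _))
    (hP₂ : ∃ S : Finset (EuclideanSpace ℝ (Fin n)), P₂ = convexHull ℝ (S : Set _))
    (hdim₁ : (interior P₁).Nonempty) (hdim₂ : (interior P₂).Nonempty)
    (hsame : ∀ w : EuclideanSpace ℝ (Fin n), ‖w‖ = 1 →
      (Module.finrank ℝ (vectorSpan ℝ (supportSet P₁ w)) = n - 1 ↔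
       Module.finrank ℝ (vectorSpan ℝ (supportSet P₂ w)) = n - 1))
    (u : EuclideanSpace ℝ (Fin n)) (hu : ‖u‖ = 1)
    (hufacet : Module.finrank ℝ (vectorSpan ℝ (supportSet P₁ u)) = n - 1)
    (htrans : ∃ y : EuclideanSpace ℝ (Fin n),
      supportSet P₂ u = (fun x => y + x) '' supportSet P₁ u)
    (v : EuclideanSpace ℝ (Fin n)) (hv : ‖v‖ = 1)
    (hvfacet : Module.finrank ℝ (vectorSpan ℝ (supportSet P₁ v)) = n - 1)
    (hadj : Module.finrank ℝ (vectorSpan ℝ (supportSet P₁ u ∩ supportSet P₁ v)) = n - 2) :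
    Module.finrank ℝ (vectorSpan ℝ (supportSet P₂ v)) = n - 1 ∧
    Module.finrank ℝ (vectorSpan ℝ (supportSet P₂ u ∩ supportSet P₂ v)) = n - 2 := by
  obtain ⟨S₁, rfl⟩ := hP₁
  obtain ⟨S₂, rfl⟩ := hP₂
  have hS₁ : S₁.Nonempty := by
    rw [← Finset.coe_nonempty, ← convexHull_nonempty_iff (𝕜 := ℝ)]
    exact hdim₁.mono interior_subset
  have hS₂ : S₂.Nonempty := by
    rw [← Finset.coe_nonempty, ← convexHull_nonempty_iff (𝕜 := ℝ)]
    exact hdim₂.mono interior_subset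
  have hu0 : u ≠ 0 := fun h => by simp [h] at hu
  have hv0 : v ≠ 0 := fun h => by simp [h] at hv
  refine ⟨(hsame v hv).mp hvfacet, ?_⟩
  rcases Nat.lt_or_ge n 3 with hn | hn
  · -- small dimensions
    have hsub1 : vectorSpan ℝ (supportSet (convexHull ℝ ↑S₂) u ∩ supportSet (convexHull ℝ ↑S₂) v)
        ≤ (Submodule.span ℝ {u})ᗮ := by
      refine le_trans (vectorSpan_mono ℝ Set.inter_subset_left) ?_
      exact vectorSpan_le_orthogonal _ u _ (fun x hx => (mem_supportSet_iff.mp hx).2)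
    have hfin1 : Module.finrank ℝ
        (vectorSpan ℝ (supportSet (convexHull ℝ ↑S₂) u ∩ supportSet (convexHull ℝ ↑S₂) v))
        ≤ n - 1 := by
      have := Submodule.finrank_mono hsub1
      rw [finrank_orth_singleton hu0] at this
      exact this
    interval_cases n
    · -- n = 0 : impossible since ‖u‖ = 1
      exfalso
      have : u = 0 := by
        ext i
        exact absurd i.2 (by omega)
      exact hu0 this
    · -- n = 1
      omega
    · -- n = 2
      by_cases hvu : v = u
      · exfalso
        rw [hvu, Set.inter_self, hufacet] at hadj
        omega
      by_cases hvnu : v = -u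
      · rw [hvnu, supportSet_neg_disjoint S₂ hS₂ hdim₂ u hu, vectorSpan_empty, finrank_bot]
      · -- u, v independent : the orthogonal complement of their span is trivial
        have hind : LinearIndependent ℝ ![u, v] := by
          rw [LinearIndependent.pair_iff]
          intro s t hst
          by_contra hcon
          have ht : t ≠ 0 := by
            intro h0
            rw [h0, zero_smul, add_zero] at hst
            have hs : s = 0 := by
              by_contra hs0
              exact hu0 ((smul_eq_zero_iff_right hs0).mp hst)
            exact hcon ⟨hs, h0⟩
          have h1 : t • v = -(s • u) := by
            rw [eq_neg_iff_add_eq_zero, add_comm]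
            exact hst
          have h2 : v = (t⁻¹ * (-s)) • u := by
            rw [mul_smul, neg_smul, ← h1, smul_smul, inv_mul_cancel₀ ht, one_smul]
          have hnormc : |t⁻¹ * (-s)| = 1 := by
            have h3 := congrArg norm h2
            rw [hv, norm_smul, hu, mul_one, Real.norm_eq_abs] at h3
            exact h3.symm
          rcases (abs_eq (by norm_num : (0:ℝ) ≤ 1)).mp hnormc with h4 | h4
          · rw [h4, one_smul] at h2
            exact hvu h2
          · rw [h4, neg_one_smul] at h2
            exact hvnu h2
        have htop : Submodule.span ℝ ({u, v} : Set (EuclideanSpace ℝ (Fin 2))) = ⊤ := by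
          apply Submodule.eq_top_of_finrank_eq
          rw [finrank_euclideanSpace_fin]
          have hr : Set.range ![u, v] = {u, v} := by
            simp only [Matrix.range_cons, Matrix.range_empty, Set.union_empty,
              Set.union_singleton]
            exact Set.pair_comm v u
          rw [← hr, finrank_span_eq_card hind]
          simp
        have hsubv : vectorSpan ℝ
            (supportSet (convexHull ℝ ↑S₂) u ∩ supportSet (convexHull ℝ ↑S₂) v)
            ≤ (Submodule.span ℝ {v})ᗮ := by
          refine le_trans (vectorSpan_mono ℝ Set.inter_subset_right) ?_
          exact vectorSpan_le_orthogonal _ v _ (fun x hx => (mem_supportSet_iff.mp hx).2)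
        have hbot : (Submodule.span ℝ {u})ᗮ ⊓ (Submodule.span ℝ {v})ᗮ
            = (⊥ : Submodule ℝ (EuclideanSpace ℝ (Fin 2))) := by
          rw [Submodule.inf_orthogonal]
          have hspan : Submodule.span ℝ ({u} : Set (EuclideanSpace ℝ (Fin 2)))
              ⊔ Submodule.span ℝ {v} = Submodule.span ℝ ({u, v} : Set _) := by
            rw [Set.insert_eq, Submodule.span_union]
          rw [hspan, htop, Submodule.top_orthogonal_eq_bot]
        have hle : vectorSpan ℝ
            (supportSet (convexHull ℝ ↑S₂) u ∩ supportSet (convexHull ℝ ↑S₂) v)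
            = (⊥ : Submodule ℝ (EuclideanSpace ℝ (Fin 2))) := by
          rw [← le_bot_iff, ← hbot]
          exact le_inf hsub1 hsubv
        rw [hle, finrank_bot]
  · -- main case n ≥ 3
    obtain ⟨y, hy⟩ := htrans
    exact main_aux hn S₁ S₂ hS₁ hS₂ hdim₁ hsame u hu y hy v hv hadj
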